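/- Let A ≥ B ≥ 1 be integers, a and b nonzero real numbers, and y_1,…,y_A, z_1,…,z_B real numbers. In ℝ[X] set P(X) = a·Π_{i=1}^{A}(X − y_i) and D(X) = b·Π_{i=1}^{B}(X − z_i), let C = A − B, and let Q be the quotient in the division P = D·Q + R with deg R < B. Then for every 0 ≤ i ≤ C, the coefficient of X^i in Q equals (a/b)·(−1)^{C−i}·Σ_{v=0}^{C−i} (−1)^v e_{C−i−v}(y_1,…,y_A) h_v(z_1,…,z_B), where e_r and h_r denote respectively the r-th elementary symmetric polynomial and the r-th complete homogeneous symmetric polynomial in the indicated variables. -/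

import Mathlib

open Polynomial Finset Finset.Nat

/-- `r`-th elementary symmetric polynomial in the values `x 1, …, x N`. -/
noncomputable def esym (N r : ℕ) (x : ℕ → ℝ) : ℝ :=
  ∑ s ∈ Finset.powersetCard r (Finset.Icc 1 N), ∏ i ∈ s, x i

/-- `r`-th complete homogeneous symmetric polynomial in the values `x 1, …, x N`:
the sum over weakly increasing tuples `1 ≤ i_1 ≤ ⋯ ≤ i_r ≤ N` of `x i_1 ⋯ x i_r`. -/
noncomputable def hsym (N r : ℕ) (x : ℕ → ℝ) : ℝ :=
  ∑ f ∈ Finset.univ.filter (fun f : Fin r → Fin N => ∀ i j : Fin r, i ≤ j → f i ≤ f j),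
    ∏ i : Fin r, x ((f i : ℕ) + 1)

lemma esym_zero (N : ℕ) (x : ℕ → ℝ) : esym N 0 x = 1 := by
  simp [esym]

lemma esym_of_lt {N r : ℕ} (h : N < r) (x : ℕ → ℝ) : esym N r x = 0 := by
  have : Finset.powersetCard r (Finset.Icc 1 N) = ∅ := by
    rw [Finset.powersetCard_eq_empty]
    simpa using h
  simp [esym, this]

lemma esym_succ_succ (N r : ℕ) (x : ℕ → ℝ) :
    esym (N+1) (r+1) x = esym N (r+1) x + x (N+1) * esym N r x := by
  have hins : Finset.Icc 1 (N+1) = insert (N+1) (Finset.Icc 1 N) := by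
    ext i
    simp only [Finset.mem_Icc, Finset.mem_insert]
    omega
  have hnm : (N+1) ∉ Finset.Icc 1 N := by simp
  rw [esym, hins, Finset.powersetCard_succ_insert hnm, Finset.sum_union, Finset.sum_image]
  · rw [esym, esym, Finset.mul_sum]
    congr 1
    refine Finset.sum_congr rfl fun s hs => ?_
    rw [Finset.prod_insert]
    exact fun hmem => hnm ((Finset.mem_powersetCard.mp hs).1 hmem)
  · intro s hs t ht hst
    have hs' := (Finset.mem_powersetCard.mp hs).1
    have ht' := (Finset.mem_powersetCard.mp ht).1
    ext i
    constructor <;> intro hi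
    · have : i ∈ insert (N+1) t := hst ▸ Finset.mem_insert_of_mem hi
      rcases Finset.mem_insert.mp this with h1 | h1
      · exact absurd (h1 ▸ hi) fun h => hnm (hs' h)
      · exact h1
    · have : i ∈ insert (N+1) s := hst.symm ▸ Finset.mem_insert_of_mem hi
      rcases Finset.mem_insert.mp this with h1 | h1
      · exact absurd (h1 ▸ hi) fun h => hnm (ht' h)
      · exact h1
  · rw [Finset.disjoint_left]
    intro s hs hs'
    obtain ⟨t, ht, rfl⟩ := Finset.mem_image.mp hs'
    have := (Finset.mem_powersetCard.mp hs).1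
    exact hnm (this (Finset.mem_insert_self _ _))

noncomputable def hrec (x : ℕ → ℝ) : ℕ → ℕ → ℝ
  | _, 0 => 1
  | 0, _+1 => 0
  | N+1, v+1 => hrec x N (v+1) + x (N+1) * hrec x (N+1) v

@[simp] lemma hrec_zero (x : ℕ → ℝ) (N : ℕ) : hrec x N 0 = 1 := by cases N <;> simp [hrec]
lemma hrec_zero_succ (x : ℕ → ℝ) (v : ℕ) : hrec x 0 (v+1) = 0 := by simp [hrec]
lemma hrec_succ_succ (x : ℕ → ℝ) (N v : ℕ) :
    hrec x (N+1) (v+1) = hrec x N (v+1) + x (N+1) * hrec x (N+1) v := by rw [hrec]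

lemma keyA (x : ℕ → ℝ) (N s : ℕ) :
    ∑ p ∈ antidiagonal s, (-1:ℝ)^p.2 * esym N p.1 x * hrec x N p.2
      = if s = 0 then 1 else 0 := by
  induction N with
  | zero =>
    cases s with
    | zero => simp [esym_zero]
    | succ s =>
      rw [if_neg (by omega)]
      refine Finset.sum_eq_zero fun p hp => ?_
      rw [Finset.HasAntidiagonal.mem_antidiagonal] at hp
      rcases Nat.eq_zero_or_pos p.2 with h2 | h2
      · have h1 : 0 < p.1 := by omega
        rw [esym_of_lt h1 x]; ring
      · obtain ⟨v, hv⟩ := Nat.exists_eq_succ_of_ne_zero (by omega : p.2 ≠ 0)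
        rw [hv, hrec_zero_succ]; ring
  | succ N ih =>
    cases s with
    | zero => simp [esym_zero]
    | succ s =>
      set c := x (N+1) with hc
      have hU : ∀ w, (∑ p ∈ antidiagonal (w+1), (-1:ℝ)^p.2 * esym N p.1 x * hrec x (N+1) p.2)
          = (∑ p ∈ antidiagonal (w+1), (-1:ℝ)^p.2 * esym N p.1 x * hrec x N p.2)
            - c * ∑ p ∈ antidiagonal w, (-1:ℝ)^p.2 * esym N p.1 x * hrec x (N+1) p.2 := by
        intro w
        have key : (∑ p ∈ antidiagonal w, (-1:ℝ)^(p.2+1) * esym N p.1 x * hrec x (N+1) (p.2+1))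
            + c * ∑ p ∈ antidiagonal w, (-1:ℝ)^p.2 * esym N p.1 x * hrec x (N+1) p.2
            = ∑ p ∈ antidiagonal w, (-1:ℝ)^(p.2+1) * esym N p.1 x * hrec x N (p.2+1) := by
          rw [Finset.mul_sum, ← Finset.sum_add_distrib]
          refine Finset.sum_congr rfl fun p hp => ?_
          rw [hrec_succ_succ, ← hc]
          ring
        rw [Finset.Nat.sum_antidiagonal_succ'
              (f := fun p => (-1:ℝ)^p.2 * esym N p.1 x * hrec x (N+1) p.2),
            Finset.Nat.sum_antidiagonal_succ'
              (f := fun p => (-1:ℝ)^p.2 * esym N p.1 x * hrec x N p.2),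
            eq_sub_iff_add_eq]
        simp only [hrec_zero, pow_zero, one_mul, mul_one]
        rw [add_assoc, key]
      rw [Finset.Nat.sum_antidiagonal_succ
        (f := fun p => (-1:ℝ)^p.2 * esym (N+1) p.1 x * hrec x (N+1) p.2)]
      simp only [esym_succ_succ, ← hc]
      have expand : (∑ p ∈ antidiagonal s,
            (-1:ℝ)^p.2 * (esym N (p.1+1) x + c * esym N p.1 x) * hrec x (N+1) p.2)
          = (∑ p ∈ antidiagonal s, (-1:ℝ)^p.2 * esym N (p.1+1) x * hrec x (N+1) p.2)
            + c * ∑ p ∈ antidiagonal s, (-1:ℝ)^p.2 * esym N p.1 x * hrec x (N+1) p.2 := by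
        rw [Finset.mul_sum, ← Finset.sum_add_distrib]
        exact Finset.sum_congr rfl fun p hp => by ring
      rw [expand]
      have hre : (-1:ℝ)^(s+1) * esym (N+1) 0 x * hrec x (N+1) (s+1)
            + ((∑ p ∈ antidiagonal s, (-1:ℝ)^p.2 * esym N (p.1+1) x * hrec x (N+1) p.2))
          = ∑ p ∈ antidiagonal (s+1), (-1:ℝ)^p.2 * esym N p.1 x * hrec x (N+1) p.2 := by
        rw [Finset.Nat.sum_antidiagonal_succ
          (f := fun p => (-1:ℝ)^p.2 * esym N p.1 x * hrec x (N+1) p.2)]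
        rw [esym_zero, esym_zero]
      rw [← add_assoc, hre, hU s, sub_add_cancel]
      exact ih

lemma hsym_zero (N : ℕ) (x : ℕ → ℝ) : hsym N 0 x = 1 := by
  rw [hsym]
  rw [Finset.filter_true_of_mem (fun f _ => fun i j _ => by exact absurd i.2 (by omega))]
  simp

lemma hsym_zero_succ (v : ℕ) (x : ℕ → ℝ) : hsym 0 (v+1) x = 0 := by
  rw [hsym]
  have : (Finset.univ : Finset (Fin (v+1) → Fin 0)) = ∅ := by
    apply Finset.univ_eq_empty
  simp [this]

lemma hsym_succ_succ (N v : ℕ) (x : ℕ → ℝ) :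
    hsym (N+1) (v+1) x = hsym N (v+1) x + x (N+1) * hsym (N+1) v x := by
  classical
  rw [hsym]
  rw [← Finset.sum_filter_add_sum_filter_not _
    (fun f : Fin (v+1) → Fin (N+1) => f (Fin.last v) = Fin.last N)]
  rw [add_comm]
  congr 1
  · -- f last ≠ last : corresponds to hsym N (v+1)
    rw [hsym]
    refine Finset.sum_bij' (i := fun f hf => ?_) (j := fun g hg => ?_) ?_ ?_ ?_ ?_ ?_
    · -- i : map into Fin N functions
      intro k
      refine Fin.castLT (f k) ?_
      simp only [Finset.mem_filter, Finset.mem_univ, true_and] at hf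
      obtain ⟨hmono, hne⟩ := hf
      have h1 : f k ≤ f (Fin.last v) := hmono k (Fin.last v) (Fin.le_last k)
      have h2 : f (Fin.last v) < Fin.last N := lt_of_le_of_ne (Fin.le_last _) hne
      have h3 := lt_of_le_of_lt h1 h2
      have : (f k : ℕ) < (Fin.last N : ℕ) := h3
      simpa using this
    · exact fun k => Fin.castSucc (g k)
    · intro f hf
      simp only [Finset.mem_filter, Finset.mem_univ, true_and] at hf ⊢
      intro i j hij
      exact hf.1 i j hij
    · intro g hg
      simp only [Finset.mem_filter, Finset.mem_univ, true_and] at hg ⊢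
      constructor
      · intro i j hij
        exact Fin.castSucc_le_castSucc_iff.mpr (hg i j hij)
      · intro hcon
        have hval : ((g (Fin.last v)) : ℕ) = N := by
          have := congrArg Fin.val hcon
          simpa using this
        exact absurd hval (Nat.ne_of_lt (g (Fin.last v)).2)
    · intro f hf; funext k; simp
    · intro g hg; funext k; simp [Fin.castLT]
    · intro f hf
      refine Finset.prod_congr rfl fun k _ => ?_
      simp
  · -- f last = last : corresponds to x (N+1) * hsym (N+1) v
    rw [hsym, Finset.mul_sum]
    refine Finset.sum_bij' (i := fun f hf => f ∘ Fin.castSucc)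
      (j := fun g hg => Fin.snoc g (Fin.last N)) ?_ ?_ ?_ ?_ ?_
    · intro f hf
      simp only [Finset.mem_filter, Finset.mem_univ, true_and] at hf ⊢
      intro i j hij
      exact hf.1 _ _ (Fin.castSucc_le_castSucc_iff.mpr hij)
    · intro g hg
      simp only [Finset.mem_filter, Finset.mem_univ, true_and] at hg ⊢
      constructor
      · intro i j hij
        by_cases hj : j = Fin.last v
        · subst hj
          rw [Fin.snoc_last]
          exact Fin.le_last _
        · have hjv : (j : ℕ) < v := by
            rcases lt_or_eq_of_le (Fin.le_last j) with h | h
            · exact h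
            · exact absurd h hj
          have hiv : (i : ℕ) < v := lt_of_le_of_lt hij hjv
          have hi' : i = Fin.castSucc (Fin.castLT i hiv) := (Fin.castSucc_castLT i hiv).symm
          have hj' : j = Fin.castSucc (Fin.castLT j hjv) := (Fin.castSucc_castLT j hjv).symm
          rw [hi', hj', Fin.snoc_castSucc, Fin.snoc_castSucc]
          exact hg _ _ hij
      · exact Fin.snoc_last _ _
    · intro f hf
      simp only [Finset.mem_filter, Finset.mem_univ, true_and] at hf
      beta_reduce
      funext k
      by_cases hk : k = Fin.last v
      · subst hk; rw [Fin.snoc_last, hf.2]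
      · have hkv : (k : ℕ) < v := by
          rcases lt_or_eq_of_le (Fin.le_last k) with h | h
          · exact h
          · exact absurd h hk
        have hk' : k = Fin.castSucc (Fin.castLT k hkv) := (Fin.castSucc_castLT k hkv).symm
        rw [hk', Fin.snoc_castSucc]
        rfl
    · intro g hg
      beta_reduce
      funext k
      simp [Fin.snoc_castSucc]
    · intro f hf
      simp only [Finset.mem_filter, Finset.mem_univ, true_and] at hf
      rw [Fin.prod_univ_castSucc (f := fun i => x ((f i : ℕ) + 1))]
      rw [hf.2]
      simp [mul_comm]

lemma hsym_eq_hrec (N v : ℕ) (x : ℕ → ℝ) : hsym N v x = hrec x N v := by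
  induction N generalizing v with
  | zero =>
    cases v with
    | zero => rw [hsym_zero, hrec_zero]
    | succ v => rw [hsym_zero_succ, hrec_zero_succ]
  | succ N ihN =>
    induction v with
    | zero => rw [hsym_zero, hrec_zero]
    | succ v ihv =>
      rw [hsym_succ_succ, hrec_succ_succ, ihN (v+1), ihv]

lemma regroup (m : ℕ) (g : ℕ → ℕ → ℕ → ℝ) :
    ∑ p ∈ antidiagonal m, ∑ q ∈ antidiagonal p.2, g p.1 q.1 q.2
      = ∑ p ∈ antidiagonal m, ∑ q ∈ antidiagonal p.1, g q.1 q.2 p.2 := by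
  rw [Finset.sum_sigma', Finset.sum_sigma']
  refine Finset.sum_nbij'
    (i := fun x : (_ : ℕ × ℕ) × ℕ × ℕ => ⟨(x.1.1 + x.2.1, x.2.2), (x.1.1, x.2.1)⟩)
    (j := fun x : (_ : ℕ × ℕ) × ℕ × ℕ => ⟨(x.2.1, x.2.2 + x.1.2), (x.2.2, x.1.2)⟩)
    ?_ ?_ ?_ ?_ ?_
  · rintro ⟨⟨t, s⟩, ⟨v, u⟩⟩ hx
    simp only [Finset.mem_sigma, Finset.HasAntidiagonal.mem_antidiagonal] at hx ⊢
    exact ⟨by omega, trivial⟩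
  · rintro ⟨⟨w, u⟩, ⟨t, v⟩⟩ hx
    simp only [Finset.mem_sigma, Finset.HasAntidiagonal.mem_antidiagonal] at hx ⊢
    exact ⟨by omega, trivial⟩
  · rintro ⟨⟨t, s⟩, ⟨v, u⟩⟩ hx
    simp only [Finset.mem_sigma, Finset.HasAntidiagonal.mem_antidiagonal] at hx
    simp only [Sigma.mk.inj_iff, Prod.mk.injEq]
    exact ⟨⟨trivial, by omega⟩, HEq.rfl⟩
  · rintro ⟨⟨w, u⟩, ⟨t, v⟩⟩ hx
    simp only [Finset.mem_sigma, Finset.HasAntidiagonal.mem_antidiagonal] at hx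
    simp only [Sigma.mk.inj_iff, Prod.mk.injEq]
    exact ⟨⟨by omega, trivial⟩, HEq.rfl⟩
  · rintro ⟨⟨t, s⟩, ⟨v, u⟩⟩ hx
    rfl

lemma keyB (A B m : ℕ) (y z : ℕ → ℝ) :
    ∑ p ∈ antidiagonal m, esym B p.1 z *
      (∑ q ∈ antidiagonal p.2, (-1:ℝ)^q.1 * esym A q.2 y * hrec z B q.1)
      = esym A m y := by
  have h1 : ∀ p : ℕ × ℕ, esym B p.1 z *
      (∑ q ∈ antidiagonal p.2, (-1:ℝ)^q.1 * esym A q.2 y * hrec z B q.1)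
      = ∑ q ∈ antidiagonal p.2,
          esym B p.1 z * ((-1:ℝ)^q.1 * esym A q.2 y * hrec z B q.1) := by
    intro p; rw [Finset.mul_sum]
  simp only [h1]
  rw [regroup m (fun t v u => esym B t z * ((-1:ℝ)^v * esym A u y * hrec z B v))]
  have h2 : ∀ p : ℕ × ℕ, p ∈ antidiagonal m →
      (∑ q ∈ antidiagonal p.1, esym B q.1 z * ((-1:ℝ)^q.2 * esym A p.2 y * hrec z B q.2))
      = esym A p.2 y * (if p.1 = 0 then 1 else 0) := by
    intro p _
    rw [← keyA z B p.1, Finset.mul_sum]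
    exact Finset.sum_congr rfl fun q _ => by ring
  rw [Finset.sum_congr rfl h2]
  rw [Finset.sum_eq_single_of_mem (0, m) (by simp)]
  · simp
  · rintro ⟨w, u⟩ hp hne
    simp only [Finset.HasAntidiagonal.mem_antidiagonal] at hp
    have : w ≠ 0 := by
      intro h; subst h; simp at hp; subst hp; exact hne rfl
    simp [this]

lemma prod_coeff (N : ℕ) (x : ℕ → ℝ) {k : ℕ} (h : k ≤ N) :
    (∏ i ∈ Finset.Icc 1 N, (X - Polynomial.C (x i))).coeff k
      = (-1)^(N-k) * esym N (N-k) x := by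
  have hcard : (Finset.Icc 1 N).card = N := by simp [Nat.card_Icc]
  have h1 : (∏ i ∈ Finset.Icc 1 N, (X - Polynomial.C (x i)))
      = (((Finset.Icc 1 N).val.map x).map (fun t => X - Polynomial.C t)).prod := by
    rw [Multiset.map_map]
    rfl
  have hcard' : Multiset.card ((Finset.Icc 1 N).val.map x) = N := by
    rw [Multiset.card_map]; exact hcard
  rw [h1, Multiset.prod_X_sub_C_coeff _ (by rw [hcard']; exact h), hcard',
    Finset.esymm_map_val]
  rfl

lemma prod_natDegree (N : ℕ) (x : ℕ → ℝ) :
    (∏ i ∈ Finset.Icc 1 N, (X - Polynomial.C (x i))).natDegree = N := by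
  rw [Polynomial.natDegree_prod _ _ (fun i _ => X_sub_C_ne_zero (x i))]
  simp [Nat.card_Icc]

lemma prod_monic (N : ℕ) (x : ℕ → ℝ) :
    (∏ i ∈ Finset.Icc 1 N, (X - Polynomial.C (x i))).Monic :=
  monic_prod_of_monic _ _ fun i _ => monic_X_sub_C (x i)

lemma prod_coeff_zero (N : ℕ) (x : ℕ → ℝ) {k : ℕ} (h : N < k) :
    (∏ i ∈ Finset.Icc 1 N, (X - Polynomial.C (x i))).coeff k = 0 :=
  Polynomial.coeff_eq_zero_of_natDegree_lt (by rw [prod_natDegree]; exact h)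

lemma prod_degree (N : ℕ) (x : ℕ → ℝ) :
    (∏ i ∈ Finset.Icc 1 N, (X - Polynomial.C (x i))).degree = (N : WithBot ℕ) := by
  rw [Polynomial.degree_eq_natDegree (prod_monic N x).ne_zero, prod_natDegree]

/-- The coefficients of the quotient `Q` in the division of `P = a ∏ (X−y_i)` by
`D = b ∏ (X−z_i)`: the coefficient of `X^i` in `Q` equals
`(a/b)(−1)^{C−i} ∑_{v=0}^{C−i} (−1)^v e_{C−i−v}(y) h_v(z)`, with `C = A − B`. -/

theorem stmt_8 (A B : ℕ) (hB : 1 ≤ B) (hAB : B ≤ A) (a b : ℝ) (ha : a ≠ 0) (hb : b ≠ 0)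
    (y z : ℕ → ℝ) (Q Rem : Polynomial ℝ)
    (hdiv : Polynomial.C a * ∏ i ∈ Finset.Icc 1 A, (X - Polynomial.C (y i))
      = (Polynomial.C b * ∏ i ∈ Finset.Icc 1 B, (X - Polynomial.C (z i))) * Q + Rem)
    (hRem : Rem.degree < (B : WithBot ℕ)) :
    ∀ i ≤ A - B,
      Q.coeff i = (a / b) * (-1 : ℝ) ^ (A - B - i) *
        ∑ v ∈ Finset.range (A - B - i + 1),
          (-1 : ℝ) ^ v * esym A (A - B - i - v) y * hsym B v z := by
  classical
  set Cc := A - B with hCc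
  set P : Polynomial ℝ := Polynomial.C a * ∏ i ∈ Finset.Icc 1 A, (X - Polynomial.C (y i))
    with hP
  set D : Polynomial ℝ := Polynomial.C b * ∏ i ∈ Finset.Icc 1 B, (X - Polynomial.C (z i))
    with hD
  set c : ℕ → ℝ := fun i => (a/b) * (-1:ℝ)^(Cc - i) *
      ∑ v ∈ Finset.range (Cc - i + 1), (-1:ℝ)^v * esym A (Cc - i - v) y * hrec z B v
    with hc
  set Q₀ : Polynomial ℝ := ∑ i ∈ Finset.range (Cc+1), Polynomial.C (c i) * X^i with hQ₀
  -- coefficients of Q₀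
  have hQ₀coeff : ∀ i, Q₀.coeff i = if i ≤ Cc then c i else 0 := by
    intro i
    rw [hQ₀, Polynomial.finset_sum_coeff]
    simp only [Polynomial.coeff_C_mul, Polynomial.coeff_X_pow, mul_ite, mul_one, mul_zero]
    rw [Finset.sum_ite_eq (Finset.range (Cc+1)) i c]
    simp [Nat.lt_succ_iff]
  -- T function
  set T : ℕ → ℝ := fun s => ∑ v ∈ Finset.range (s + 1),
      (-1:ℝ)^v * esym A (s - v) y * hrec z B v with hT
  have hTad : ∀ s, T s = ∑ q ∈ antidiagonal s, (-1:ℝ)^q.1 * esym A q.2 y * hrec z B q.1 := by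
    intro s
    rw [hT]
    rw [Finset.Nat.sum_antidiagonal_eq_sum_range_succ
      (f := fun v u => (-1:ℝ)^v * esym A u y * hrec z B v)]
  -- key real identity
  have hkey : ∀ m : ℕ, ∑ t ∈ Finset.range (m+1), esym B t z * T (m - t) = esym A m y := by
    intro m
    rw [← keyB A B m y z]
    rw [Finset.Nat.sum_antidiagonal_eq_sum_range_succ
      (f := fun t s => esym B t z * (∑ q ∈ antidiagonal s, (-1:ℝ)^q.1 * esym A q.2 y * hrec z B q.1))]
    exact Finset.sum_congr rfl fun t _ => by rw [hTad]
  -- coefficient identity for k ≥ B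
  have hcoeff : ∀ k, B ≤ k → (D * Q₀).coeff k = P.coeff k := by
    intro k hk
    rw [Polynomial.coeff_mul]
    by_cases hkA : k ≤ A
    · set m := A - k with hm
      have hmC : m ≤ Cc := by omega
      -- turn antidiagonal sum into range sum
      rw [Finset.Nat.sum_antidiagonal_eq_sum_range_succ_mk
        (f := fun p => D.coeff p.1 * Q₀.coeff p.2)]
      beta_reduce
      -- restrict to range (B+1)
      rw [← Finset.sum_subset (Finset.range_subset_range.mpr (by omega : B + 1 ≤ k + 1))
        (fun j hj hj' => by
          have hjB : B < j := by simp at hj hj'; omega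
          show D.coeff j * Q₀.coeff (k - j) = 0
          have hDj : D.coeff j = 0 := by
            rw [hD, Polynomial.coeff_C_mul, prod_coeff_zero B z hjB, mul_zero]
          rw [hDj, zero_mul])]
      -- reflect the sum
      rw [← Finset.sum_range_reflect (fun j => D.coeff j * Q₀.coeff (k - j)) (B+1)]
      -- compute each term
      have hterm : ∀ t ∈ Finset.range (B+1),
          D.coeff (B + 1 - 1 - t) * Q₀.coeff (k - (B + 1 - 1 - t))
          = if t ≤ m then a * (-1:ℝ)^m * (esym B t z * T (m - t)) else 0 := by
        intro t ht
        simp only [Finset.mem_range] at ht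
        have htB : t ≤ B := by omega
        have e1 : B + 1 - 1 - t = B - t := by omega
        rw [e1]
        have e2 : k - (B - t) = k - B + t := by omega
        rw [e2]
        have e5 : B - (B - t) = t := by omega
        have hDc : D.coeff (B - t) = b * ((-1:ℝ)^t * esym B t z) := by
          rw [hD, Polynomial.coeff_C_mul, prod_coeff B z (by omega : B - t ≤ B), e5]
        rw [hDc, hQ₀coeff]
        by_cases htm : t ≤ m
        · have hle : k - B + t ≤ Cc := by omega
          rw [if_pos hle, if_pos htm]
          have e3 : Cc - (k - B + t) = m - t := by omega
          simp only [hc, hT, e3]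
          have e4 : ((-1:ℝ))^t * (-1:ℝ)^(m - t) = (-1:ℝ)^m := by
            rw [← pow_add]
            congr 1
            omega
          have hba : b * (a / b) = a := by field_simp
          calc b * ((-1:ℝ)^t * esym B t z) *
                (a / b * (-1:ℝ)^(m-t) * ∑ v ∈ Finset.range (m - t + 1),
                  (-1:ℝ)^v * esym A (m - t - v) y * hrec z B v)
              = (b * (a/b)) * (((-1:ℝ)^t * (-1:ℝ)^(m-t)) * (esym B t z *
                  ∑ v ∈ Finset.range (m - t + 1),
                    (-1:ℝ)^v * esym A (m - t - v) y * hrec z B v)) := by ring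
            _ = _ := by rw [e4, hba]; ring
        · have hle : ¬ (k - B + t ≤ Cc) := by omega
          rw [if_neg hle, if_neg htm, mul_zero]
      rw [Finset.sum_congr rfl hterm]
      -- extend/convert to the key identity
      have hsplit : ∑ t ∈ Finset.range (B+1),
            (if t ≤ m then a * (-1:ℝ)^m * (esym B t z * T (m - t)) else 0)
          = ∑ t ∈ Finset.range (m+1), a * (-1:ℝ)^m * (esym B t z * T (m - t)) := by
        rcases le_total m B with hmB | hBm
        · rw [← Finset.sum_subset (Finset.range_subset_range.mpr (by omega : m + 1 ≤ B + 1))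
            (fun j hj hj' => by
              have : ¬ (j ≤ m) := by simp at hj hj'; omega
              rw [if_neg this])]
          exact Finset.sum_congr rfl fun t ht => by
            rw [if_pos (by simp at ht; omega)]
        · rw [← Finset.sum_subset (Finset.range_subset_range.mpr (by omega : B + 1 ≤ m + 1))
            (fun j hj hj' => by
              have hjB : B < j := by simp at hj hj'; omega
              rw [esym_of_lt hjB z]
              simp)]
          exact Finset.sum_congr rfl fun t ht => by
            rw [if_pos (by simp at ht; omega)]
      rw [hsplit, ← Finset.mul_sum, hkey m]
      rw [hP, Polynomial.coeff_C_mul, prod_coeff A y hkA, ← hm]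
      ring
    · -- k > A : both sides zero
      have hPc : P.coeff k = 0 := by
        rw [hP, Polynomial.coeff_C_mul, prod_coeff_zero A y (by omega), mul_zero]
      rw [hPc]
      refine Finset.sum_eq_zero fun p hp => ?_
      rw [Finset.HasAntidiagonal.mem_antidiagonal] at hp
      by_cases h1 : p.1 ≤ B
      · have h2 : ¬ (p.2 ≤ Cc) := by omega
        rw [hQ₀coeff, if_neg h2, mul_zero]
      · have : D.coeff p.1 = 0 := by
          rw [hD, Polynomial.coeff_C_mul, prod_coeff_zero B z (by omega), mul_zero]
        rw [this, zero_mul]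
  -- Q = Q₀ by uniqueness
  have hDdeg : D.degree = (B : WithBot ℕ) := by
    rw [hD, Polynomial.degree_C_mul (by exact hb), prod_degree]
  have hD0 : D ≠ 0 := by
    intro h
    rw [h, Polynomial.degree_zero] at hDdeg
    exact absurd hDdeg.symm (by simp)
  have hRem₀ : (P - D * Q₀).degree < (B : WithBot ℕ) := by
    rw [Polynomial.degree_lt_iff_coeff_zero]
    intro k hk
    have hk' : B ≤ k := by exact_mod_cast hk
    rw [Polynomial.coeff_sub, hcoeff k hk', sub_self]
  have hQQ : Q = Q₀ := by
    by_contra hne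
    have hsub : D * (Q - Q₀) = (P - D * Q₀) - Rem := by
      rw [mul_sub, hdiv]
      ring
    have hlt : ((P - D * Q₀) - Rem).degree < (B : WithBot ℕ) :=
      lt_of_le_of_lt (Polynomial.degree_sub_le _ _) (max_lt hRem₀ hRem)
    have hge : (B : WithBot ℕ) ≤ (D * (Q - Q₀)).degree := by
      rw [Polynomial.degree_mul, hDdeg]
      have hne' : Q - Q₀ ≠ 0 := sub_ne_zero.mpr hne
      have : 0 ≤ (Q - Q₀).degree := Polynomial.zero_le_degree_iff.mpr hne'
      calc (B : WithBot ℕ) = (B : WithBot ℕ) + 0 := by rw [add_zero]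
        _ ≤ (B : WithBot ℕ) + (Q - Q₀).degree := by exact add_le_add_right this _
    rw [hsub] at hge
    exact absurd hlt (not_lt.mpr hge)
  intro i hi
  rw [hQQ, hQ₀coeff, if_pos hi, hc]
  simp only [hsym_eq_hrec]
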